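/- (Lebeau–Robbiano spectral inequality on the torus) Let a < b be real numbers. There exists a constant C > 0 such that for every real μ > 0 and every family of complex numbers (a_n)_{n ∈ ℤ}, one has ∑_{n ∈ ℤ, |n| ≤ μ} |a_n|² ≤ C·e^{C·μ}·∫_a^b | ∑_{n ∈ ℤ, |n| ≤ μ} a_n·e^{i n x} |² dx. -/

import Mathlib

open Finset Polynomial Real intervalIntegral



lemma lem_pow_fact : ∀ n : ℕ, ((n:ℝ)+1)^n ≤ Real.exp n * n.factorial := by
  intro n
  induction n with
  | zero => simp
  | succ n ih =>
    push_cast [Nat.factorial_succ]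
    have hpos : (0:ℝ) < (n:ℝ)+1 := by positivity
    have h2 : ((n:ℝ)+1+1) ≤ Real.exp (1/((n:ℝ)+1)) * ((n:ℝ)+1) := by
      have h := mul_le_mul_of_nonneg_right (Real.add_one_le_exp (1/((n:ℝ)+1))) hpos.le
      rw [add_mul, one_mul, div_mul_cancel₀ _ hpos.ne'] at h
      linarith
    have h1 : ((n:ℝ)+1+1)^(n+1) ≤ Real.exp 1 * ((n:ℝ)+1)^(n+1) := by
      calc ((n:ℝ)+1+1)^(n+1) ≤ (Real.exp (1/((n:ℝ)+1)) * ((n:ℝ)+1))^(n+1) := by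
            apply pow_le_pow_left₀ (by positivity) h2
        _ = Real.exp (1/((n:ℝ)+1))^(n+1) * ((n:ℝ)+1)^(n+1) := by rw [mul_pow]
        _ = Real.exp 1 * ((n:ℝ)+1)^(n+1) := by
            rw [← Real.exp_nat_mul]
            congr 2
            field_simp
            all_goals norm_num
    have h4 : ((n:ℝ)+1)^(n+1) ≤ ((n:ℝ)+1) * (Real.exp n * n.factorial) := by
      have h3 : ((n:ℝ)+1)^(n+1) = ((n:ℝ)+1) * ((n:ℝ)+1)^n := by ring
      rw [h3]; exact mul_le_mul_of_nonneg_left ih (by positivity)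
    calc ((n:ℝ)+1+1)^(n+1) ≤ Real.exp 1 * (((n:ℝ)+1) * (Real.exp n * n.factorial)) :=
          h1.trans (mul_le_mul_of_nonneg_left h4 (Real.exp_pos 1).le)
      _ = Real.exp ((n:ℝ)+1) * (((n:ℝ)+1) * n.factorial) := by
          rw [Real.exp_add]; ring




lemma lem_min_avg {g : ℝ → ℝ} (hg : Continuous g) {c h : ℝ} (hh : 0 < h) :
    ∃ x ∈ Set.Icc c (c+h), g x * h ≤ ∫ t in c..(c+h), g t := by
  have hcc : c ≤ c + h := by linarith
  obtain ⟨x, hx, hmin⟩ := (isCompact_Icc (a := c) (b := c+h)).exists_isMinOn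
    (Set.nonempty_Icc.mpr hcc) hg.continuousOn
  refine ⟨x, hx, ?_⟩
  have : ∫ t in c..(c+h), g x ≤ ∫ t in c..(c+h), g t := by
    apply intervalIntegral.integral_mono_on hcc (intervalIntegrable_const)
      (hg.intervalIntegrable _ _)
    exact fun t ht => hmin ht
  simpa [mul_comm] using this

lemma lem_circle_sep {s t : ℝ} (hst : |s - t| ≤ 1) :
    |s - t| / 2 ≤ ‖Complex.exp (Complex.I*s) - Complex.exp (Complex.I*t)‖ := by
  have key : ∀ θ : ℝ, |θ| ≤ 1 → |θ| / 2 ≤ ‖Complex.exp (Complex.I*θ) - 1‖ := by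
    intro θ hθ
    have hsq : ‖Complex.exp (Complex.I*θ) - 1‖ ^ 2 = 2 - 2 * Real.cos θ := by
      rw [← Complex.normSq_eq_norm_sq]
      rw [mul_comm, Complex.exp_mul_I]
      simp [Complex.normSq_apply, Complex.add_re, Complex.add_im,
        Complex.cos_ofReal_re, Complex.sin_ofReal_re]
      nlinarith [Real.sin_sq_add_cos_sq θ]
    have hπ : |θ| ≤ Real.pi := hθ.trans (by linarith [Real.pi_gt_three])
    have hcos := Real.cos_le_one_sub_mul_cos_sq hπ
    have hπ2 : Real.pi ^ 2 ≤ 16 := by nlinarith [Real.pi_lt_d2, Real.pi_pos]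
    have h1 : (|θ|/2)^2 ≤ ‖Complex.exp (Complex.I*θ) - 1‖ ^ 2 := by
      rw [hsq]
      have h18 : (1:ℝ)/8 ≤ 2/Real.pi^2 := by
        rw [div_le_div_iff₀ (by norm_num) (by positivity)]
        nlinarith
      have h2 : θ^2/8 ≤ 2 / Real.pi ^ 2 * θ ^ 2 := by
        have := mul_le_mul_of_nonneg_right h18 (sq_nonneg θ)
        linarith
      have habs : |θ|^2 = θ^2 := sq_abs θ
      nlinarith
    nlinarith [norm_nonneg (Complex.exp (Complex.I*θ) - 1), sq_nonneg
      (‖Complex.exp (Complex.I*θ) - 1‖ - |θ|/2), abs_nonneg θ]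
  have factor : Complex.exp (Complex.I*s) - Complex.exp (Complex.I*t)
      = Complex.exp (Complex.I*t) * (Complex.exp (Complex.I*(s-t)) - 1) := by
    rw [mul_sub, ← Complex.exp_add]; ring_nf
  rw [factor, norm_mul]
  have habs1 : ‖Complex.exp (Complex.I*t)‖ = 1 := by
    rw [Complex.norm_exp]; simp
  rw [habs1, one_mul]
  have := key (s - t) hst
  rwa [Complex.ofReal_sub] at this




lemma lem_prodN (i : ℕ) : ∀ d : ℕ, i ≤ d →
    ∏ j ∈ (Finset.range (d+1)).erase i, Nat.dist i j
      = i.factorial * (d-i).factorial := by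
  refine Nat.le_induction ?_ ?_
  · -- d = i
    have h1 : (Finset.range (i+1)).erase i = Finset.range i := by
      rw [Finset.range_add_one, Finset.erase_insert (by simp)]
    rw [h1]
    have h2 : ∏ j ∈ Finset.range i, Nat.dist i j = ∏ j ∈ Finset.range i, (i - j) := by
      refine Finset.prod_congr rfl fun j hj => ?_
      rw [Nat.dist_eq_sub_of_le_right (le_of_lt (Finset.mem_range.mp hj))]
    rw [h2, ← Finset.prod_range_reflect (fun j => i - j) i]
    have h3 : ∏ j ∈ Finset.range i, (i - (i - 1 - j)) = ∏ j ∈ Finset.range i, (j+1) := by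
      refine Finset.prod_congr rfl fun j hj => ?_
      have := Finset.mem_range.mp hj; omega
    rw [h3, Finset.prod_range_add_one_eq_factorial]
    simp
  · intro d hid ih
    have hne : d + 1 ≠ i := by omega
    have h1 : (Finset.range (d+2)).erase i
        = insert (d+1) ((Finset.range (d+1)).erase i) := by
      rw [Finset.range_add_one, Finset.erase_insert_of_ne hne]
    rw [h1, Finset.prod_insert (by simp)]
    rw [ih, Nat.dist_eq_sub_of_le (by omega)]
    have h2 : d + 1 - i = (d - i) + 1 := by omega
    rw [h2, Nat.factorial_succ]
    ring

lemma lem_dist_cast (i j : ℕ) : |(i:ℝ) - j| = (Nat.dist i j : ℝ) := by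
  rcases le_total i j with h | h
  · rw [Nat.dist_eq_sub_of_le h, abs_sub_comm, abs_of_nonneg (by
      rw [sub_nonneg]; exact_mod_cast h), Nat.cast_sub h]
  · rw [Nat.dist_eq_sub_of_le_right h, abs_of_nonneg (by
      rw [sub_nonneg]; exact_mod_cast h), Nat.cast_sub h]

lemma lem_fact_bound (i d : ℕ) (hid : i ≤ d) :
    (d.factorial : ℝ) ≤ 2^d * (i.factorial * (d-i).factorial) := by
  have h1 : d.choose i * i.factorial * (d-i).factorial = d.factorial :=
    Nat.choose_mul_factorial_mul_factorial hid
  have h2 : d.choose i ≤ 2^d := by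
    calc d.choose i ≤ ∑ m ∈ Finset.range (d+1), d.choose m :=
          Finset.single_le_sum (fun m _ => Nat.zero_le _) (Finset.mem_range.mpr (by omega))
      _ = 2^d := Nat.sum_range_choose d
  have := Nat.mul_le_mul_right (i.factorial * (d-i).factorial) h2
  rw [← mul_assoc, h1] at this
  calc (d.factorial:ℝ) ≤ ((2^d * (i.factorial * (d-i).factorial) : ℕ) : ℝ) := by
        exact_mod_cast this
    _ = _ := by push_cast; ring




lemma lem_int_exp (k : ℤ) :
    ∫ x in (0:ℝ)..(2*π), Complex.exp (Complex.I * k * x)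
      = if k = 0 then ((2*π:ℝ):ℂ) else 0 := by
  rcases eq_or_ne k 0 with hk | hk
  · subst hk
    simp
  · rw [if_neg hk]
    have hc : Complex.I * (k:ℂ) ≠ 0 := by
      simp [Complex.I_ne_zero, Complex.ofReal_ne_zero, hk]
    rw [integral_exp_mul_complex hc]
    push_cast
    have e2 : Complex.exp (Complex.I * (k:ℂ) * (2*(π:ℂ))) = 1 := by
      have e1 : Complex.I * (k:ℂ) * (2*(π:ℂ)) = (k:ℂ) * (2 * (π:ℂ) * Complex.I) := by ring
      rw [e1, Complex.exp_int_mul_two_pi_mul_I]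
    rw [e2]
    simp

lemma lem_coeff_bound (s : Finset ℤ) (v : ℤ → ℂ) (B : ℝ)
    (hB : ∀ x : ℝ, ‖∑ m ∈ s, v m * Complex.exp (Complex.I * m * x)‖ ≤ B)
    (n : ℤ) (hn : n ∈ s) : ‖v n‖ ≤ B := by
  have key : (∫ x in (0:ℝ)..(2*π),
      (∑ m ∈ s, v m * Complex.exp (Complex.I * m * x)) * Complex.exp (Complex.I * (-n) * x))
      = v n * ((2*π:ℝ):ℂ) := by
    have e1 : ∀ x : ℝ, (∑ m ∈ s, v m * Complex.exp (Complex.I * m * x))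
        * Complex.exp (Complex.I * (-n) * x)
        = ∑ m ∈ s, v m * Complex.exp (Complex.I * (m - n) * x) := by
      intro x
      rw [Finset.sum_mul]
      refine Finset.sum_congr rfl fun m _ => ?_
      rw [mul_assoc, ← Complex.exp_add]
      push_cast
      ring_nf
    simp_rw [e1]
    rw [intervalIntegral.integral_finset_sum]
    · have e2 : ∀ m ∈ s, (∫ x in (0:ℝ)..(2*π), v m * Complex.exp (Complex.I * (m - n) * x))
          = v m * (if m - n = 0 then ((2*π:ℝ):ℂ) else 0) := by
        intro m _
        rw [intervalIntegral.integral_const_mul]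
        have ec : ((m:ℂ) - n) = ((m - n : ℤ) : ℂ) := by push_cast; ring
        rw [ec, lem_int_exp (m - n)]
      rw [Finset.sum_congr rfl e2]
      rw [Finset.sum_eq_single n]
      · simp
      · intro m _ hmn
        rw [if_neg (by omega), mul_zero]
      · intro h; exact absurd hn h
    · intro m _
      apply Continuous.intervalIntegrable
      continuity
  have hnorm : ‖(∫ x in (0:ℝ)..(2*π),
      (∑ m ∈ s, v m * Complex.exp (Complex.I * m * x)) * Complex.exp (Complex.I * (-n) * x))‖
      ≤ B * |2*π - 0| := by
    apply intervalIntegral.norm_integral_le_of_norm_le_const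
    intro x _
    rw [norm_mul]
    have : ‖Complex.exp (Complex.I * (-n) * x)‖ = 1 := by
      rw [Complex.norm_exp]
      simp [Complex.mul_re]
    rw [this, mul_one]
    exact hB x
  rw [key] at hnorm
  have hπ : (0:ℝ) < 2*π := by positivity
  rw [norm_mul, Complex.norm_real, Real.norm_eq_abs,
    sub_zero, abs_of_pos hπ] at hnorm
  exact le_of_mul_le_mul_right hnorm hπ


lemma lem_lagrange (d : ℕ) (z : ℕ → ℂ) (Q : Polynomial ℂ)
    (hdeg : Q.degree < ((d+1 : ℕ) : WithBot ℕ))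
    (hz : ∀ i ∈ Finset.range (d+1), ‖z i‖ = 1)
    (ρ : ℝ) (hρ : 0 < ρ)
    (hsep : ∀ i ∈ Finset.range (d+1), ∀ j ∈ Finset.range (d+1), i ≠ j →
      ρ * Nat.dist i j ≤ ‖z i - z j‖)
    (M : ℝ) (hM : ∀ i ∈ Finset.range (d+1), ‖Q.eval (z i)‖ ≤ M)
    (y : ℂ) (hy : ‖y‖ = 1) :
    ‖Q.eval y‖ ≤ (d+1) * ((2/ρ)^d * 2^d / d.factorial) * M := by
  set T := Finset.range (d+1) with hT
  have hMnn : 0 ≤ M := le_trans (norm_nonneg _) (hM 0 (by simp [hT]))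
  have hinj : Set.InjOn z T := by
    intro i hi j hj hij
    by_contra hne
    have h1 := hsep i hi j hj hne
    have h2 : (0:ℝ) < ρ * Nat.dist i j := by
      have := Nat.dist_pos_of_ne hne
      positivity
    rw [hij, sub_self] at h1
    simp at h1
    linarith
  have hcard : #T = d + 1 := Finset.card_range _
  have hQ : Q = Lagrange.interpolate T z (fun i => Q.eval (z i)) :=
    Lagrange.eq_interpolate hinj (by rw [hcard]; exact hdeg)
  have heval : Q.eval y = ∑ i ∈ T, Q.eval (z i) * (Lagrange.basis T z i).eval y := by
    conv_lhs => rw [hQ]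
    rw [Lagrange.interpolate_apply, Polynomial.eval_finset_sum]
    exact Finset.sum_congr rfl fun i _ => by rw [eval_mul, eval_C]
  rw [heval]
  have key : ∀ i ∈ T, ‖Q.eval (z i) * (Lagrange.basis T z i).eval y‖
      ≤ M * ((2/ρ)^d * 2^d / d.factorial) := by
    intro i hi
    have hid : i ≤ d := by
      have := Finset.mem_range.mp hi; omega
    rw [norm_mul]
    have hbasis : ‖(Lagrange.basis T z i).eval y‖
        ≤ ∏ j ∈ T.erase i, (2 / (ρ * Nat.dist i j)) := by
      rw [Lagrange.basis, Polynomial.eval_prod]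
      rw [norm_prod]
      apply Finset.prod_le_prod (fun j _ => norm_nonneg _)
      intro j hj
      obtain ⟨hji, hjT⟩ := Finset.mem_erase.mp hj
      have hsep' := hsep i hi j hjT (Ne.symm hji)
      have hdistpos : (0:ℝ) < ρ * Nat.dist i j := by
        have := Nat.dist_pos_of_ne (Ne.symm hji)
        positivity
      rw [Lagrange.basisDivisor, eval_mul, eval_C, eval_sub, eval_X, eval_C, norm_mul, norm_inv]
      have hnum : ‖y - z j‖ ≤ 2 := by
        calc ‖y - z j‖ ≤ ‖y‖ + ‖z j‖ :=
              norm_sub_le _ _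
          _ = 2 := by rw [hy, hz j hjT]; norm_num
      have hden : ρ * Nat.dist i j ≤ ‖z i - z j‖ := hsep'
      calc (‖z i - z j‖)⁻¹ * ‖y - z j‖
          ≤ (ρ * Nat.dist i j)⁻¹ * 2 := by
            apply mul_le_mul ?_ hnum (norm_nonneg _) (by positivity)
            exact inv_anti₀ hdistpos hden
        _ = 2 / (ρ * Nat.dist i j) := by ring
    have hprod : ∏ j ∈ T.erase i, (2 / (ρ * Nat.dist i j)) ≤ (2/ρ)^d * 2^d / d.factorial := by
      have hcard' : #(T.erase i) = d := by rw [Finset.card_erase_of_mem hi, hcard]; omega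
      have e1 : ∏ j ∈ T.erase i, (2 / (ρ * (Nat.dist i j:ℝ)))
          = (2/ρ)^d * (∏ j ∈ T.erase i, ((Nat.dist i j:ℝ)))⁻¹ := by
        calc ∏ j ∈ T.erase i, (2 / (ρ * (Nat.dist i j:ℝ)))
            = ∏ j ∈ T.erase i, ((2/ρ) * ((Nat.dist i j:ℝ))⁻¹) := by
              refine Finset.prod_congr rfl fun j hj => ?_
              rw [div_mul_eq_div_div, div_eq_mul_inv (2/ρ)]
          _ = (∏ _j ∈ T.erase i, (2/ρ)) * ∏ j ∈ T.erase i, ((Nat.dist i j:ℝ))⁻¹ :=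
              Finset.prod_mul_distrib
          _ = (2/ρ)^d * (∏ j ∈ T.erase i, ((Nat.dist i j:ℝ)))⁻¹ := by
              rw [Finset.prod_const, hcard', Finset.prod_inv_distrib]
      rw [e1]
      have e2 : ∏ j ∈ T.erase i, ((Nat.dist i j:ℝ)) = (i.factorial * (d-i).factorial : ℕ) := by
        rw [← Nat.cast_prod, lem_prodN i d hid]
      rw [e2]
      have hfac := lem_fact_bound i d hid
      have hfpos : (0:ℝ) < ((i.factorial * (d-i).factorial : ℕ):ℝ) := by
        positivity
      have hd : (0:ℝ) < d.factorial := by positivity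
      have h9 : ((i.factorial * (d-i).factorial : ℕ):ℝ)⁻¹ ≤ 2^d / d.factorial := by
        rw [le_div_iff₀ hd, inv_mul_le_iff₀ hfpos]
        push_cast
        push_cast at hfac
        nlinarith
      rw [mul_div_assoc]
      exact mul_le_mul_of_nonneg_left h9 (by positivity)
    exact mul_le_mul (hM i hi) (hbasis.trans hprod) (norm_nonneg _) hMnn
  calc ‖∑ i ∈ T, Q.eval (z i) * (Lagrange.basis T z i).eval y‖
      ≤ ∑ i ∈ T, ‖Q.eval (z i) * (Lagrange.basis T z i).eval y‖ :=
        norm_sum_le _ _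
    _ ≤ ∑ i ∈ T, M * ((2/ρ)^d * 2^d / d.factorial) := Finset.sum_le_sum key
    _ = (d+1) * ((2/ρ)^d * 2^d / d.factorial) * M := by
        rw [Finset.sum_const, hcard]
        push_cast
        ring




lemma lem_Q (N : ℕ) (v : ℤ → ℂ) :
    ∃ Q : Polynomial ℂ, Q.degree < ((2*N+1 : ℕ) : WithBot ℕ) ∧
      ∀ x : ℝ, ‖Q.eval (Complex.exp (Complex.I * x))‖
        = ‖∑ n ∈ Finset.Icc (-(N:ℤ)) N,
            v n * Complex.exp (Complex.I * n * x)‖ := by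
  refine ⟨∑ n ∈ Finset.Icc (-(N:ℤ)) N, C (v n) * X ^ (n + N).toNat, ?_, ?_⟩
  · apply lt_of_le_of_lt (Polynomial.degree_sum_le _ _)
    rw [Finset.sup_lt_iff (by exact WithBot.bot_lt_coe _)]
    intro n hn
    apply lt_of_le_of_lt (Polynomial.degree_C_mul_X_pow_le _ _)
    rw [Nat.cast_lt]
    have := Finset.mem_Icc.mp hn
    omega
  · intro x
    rw [Polynomial.eval_finset_sum]
    have e1 : ∀ n ∈ Finset.Icc (-(N:ℤ)) N,
        (C (v n) * X ^ (n + N).toNat).eval (Complex.exp (Complex.I * x))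
        = Complex.exp (Complex.I * N * x) * (v n * Complex.exp (Complex.I * n * x)) := by
      intro n hn
      have hnN : (0:ℤ) ≤ n + N := by
        have := Finset.mem_Icc.mp hn; omega
      rw [eval_mul, eval_C, eval_pow, eval_X, ← Complex.exp_nat_mul]
      have e2 : ((n + N).toNat : ℂ) * (Complex.I * x) = Complex.I * N * x + Complex.I * n * x := by
        have : (((n + N).toNat : ℤ) : ℂ) = (n:ℂ) + N := by
          rw [Int.toNat_of_nonneg hnN]; push_cast; ring
        push_cast at this ⊢
        rw [this]
        ring
      rw [e2, Complex.exp_add]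
      ring
    rw [Finset.sum_congr rfl e1, ← Finset.mul_sum, norm_mul, Complex.norm_exp]
    have : (Complex.I * N * x).re = 0 := by
      simp [Complex.mul_re, Complex.mul_im]
    rw [this, Real.exp_zero, one_mul]


lemma lem_arith (L J : ℝ) (hL0 : 0 < L) (hL1 : L ≤ 1) (hJ : 0 ≤ J) (d : ℕ)
    (h : ℝ) (hh : h = L/(2*((d:ℝ)+1))) :
    ((d:ℝ)+1) * (((d:ℝ)+1) * ((4/h)^d * 2^d / d.factorial))^2 * (J / h)
      ≤ (2/L + Real.exp 4 * (16*Real.exp 1/L)^2)^(d+1) * J := by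
  obtain ⟨R, hR⟩ : ∃ R : ℝ, R = 16*Real.exp 1/L := ⟨_, rfl⟩
  obtain ⟨E, hE⟩ : ∃ E : ℝ, E = 2/L + Real.exp 4 * R^2 := ⟨_, rfl⟩
  rw [← hR, ← hE]
  have he1 : (1:ℝ) ≤ Real.exp 1 := by
    have := Real.add_one_le_exp (1:ℝ); linarith
  have hd1 : (0:ℝ) < (d:ℝ)+1 := by positivity
  have hh0 : 0 < h := by rw [hh]; positivity
  have hfac : (0:ℝ) < d.factorial := by positivity
  -- Step 1: (4/h)^d * 2^d = (16/L)^d * ((d:ℝ)+1)^d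
  have s1 : (4/h)^d * 2^d = (16/L)^d * ((d:ℝ)+1)^d := by
    rw [← mul_pow, ← mul_pow]
    congr 1
    rw [hh]
    field_simp
    ring
  -- Step 2: core ≤ R^d
  have s2 : (4/h)^d * 2^d / d.factorial ≤ R^d := by
    rw [s1, hR]
    have := lem_pow_fact d
    have hexp : Real.exp (d:ℝ) = Real.exp 1 ^ d := by
      rw [← Real.exp_nat_mul]; norm_num
    rw [div_le_iff₀ hfac]
    calc (16/L)^d * ((d:ℝ)+1)^d ≤ (16/L)^d * (Real.exp 1 ^ d * d.factorial) := by
          apply mul_le_mul_of_nonneg_left ?_ (by positivity)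
          rw [← hexp]; exact this
      _ = (16*Real.exp 1/L)^d * d.factorial := by
          rw [← mul_assoc, ← mul_pow]
          congr 2
          field_simp
  have hR0 : (0:ℝ) < R := by rw [hR]; positivity
  have hcore0 : (0:ℝ) ≤ (4/h)^d * 2^d / d.factorial := by positivity
  -- Step 3: (d+1) ≤ exp 1 ^ d
  have s3 : ((d:ℝ)+1) ≤ Real.exp 1 ^ d := by
    have := Real.add_one_le_exp (d:ℝ)
    have hexp : Real.exp (d:ℝ) = Real.exp 1 ^ d := by
      rw [← Real.exp_nat_mul]; norm_num
    linarith [hexp ▸ this]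
  -- coefficient bound
  have coeff : ((d:ℝ)+1) * (((d:ℝ)+1) * ((4/h)^d * 2^d / d.factorial))^2 * (1 / h)
      ≤ (2/L) * ((Real.exp 4 * R^2))^d := by
    have e1h : 1/h = 2*((d:ℝ)+1)/L := by rw [hh]; field_simp
    have hmain : ((d:ℝ)+1) * (((d:ℝ)+1) * ((4/h)^d * 2^d / d.factorial))^2 * (1/h)
        ≤ ((d:ℝ)+1) * (((d:ℝ)+1) * R^d)^2 * (2*((d:ℝ)+1)/L) := by
      rw [e1h]
      apply mul_le_mul_of_nonneg_right ?_ (by positivity)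
      apply mul_le_mul_of_nonneg_left ?_ hd1.le
      apply pow_le_pow_left₀ (by positivity)
      exact mul_le_mul_of_nonneg_left s2 hd1.le
    have hexp4 : Real.exp 4 = Real.exp 1 ^ (4:ℕ) := by
      rw [← Real.exp_nat_mul]; norm_num
    have hfour : ((d:ℝ)+1)^4 ≤ Real.exp 4 ^ d := by
      calc ((d:ℝ)+1)^4 ≤ (Real.exp 1 ^ d)^4 := pow_le_pow_left₀ (by positivity) s3 4
        _ = Real.exp 4 ^ d := by rw [hexp4, ← pow_mul, ← pow_mul, mul_comm]
    calc ((d:ℝ)+1) * (((d:ℝ)+1) * ((4/h)^d * 2^d / d.factorial))^2 * (1/h)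
        ≤ ((d:ℝ)+1) * (((d:ℝ)+1) * R^d)^2 * (2*((d:ℝ)+1)/L) := hmain
      _ = (2/L) * (((d:ℝ)+1)^4 * (R^d)^2) := by ring
      _ ≤ (2/L) * (Real.exp 4 ^ d * (R^d)^2) := by
          apply mul_le_mul_of_nonneg_left ?_ (by positivity)
          exact mul_le_mul_of_nonneg_right hfour (by positivity)
      _ = (2/L) * ((Real.exp 4 * R^2))^d := by
          rw [mul_pow, ← pow_mul, ← pow_mul, Nat.mul_comm]
  calc ((d:ℝ)+1) * (((d:ℝ)+1) * ((4/h)^d * 2^d / d.factorial))^2 * (J / h)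
      = (((d:ℝ)+1) * (((d:ℝ)+1) * ((4/h)^d * 2^d / d.factorial))^2 * (1/h)) * J := by ring
    _ ≤ ((2/L) * ((Real.exp 4 * R^2))^d) * J := mul_le_mul_of_nonneg_right coeff hJ
    _ ≤ E^(d+1) * J := by
        apply mul_le_mul_of_nonneg_right ?_ hJ
        have hpos1 : (0:ℝ) < 2/L := by positivity
        have hpos2 : (0:ℝ) ≤ Real.exp 4 * R^2 := by positivity
        have hEA : Real.exp 4 * R^2 ≤ E := by rw [hE]; linarith
        have hE2 : 2/L ≤ E := by rw [hE]; linarith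
        calc (2/L) * ((Real.exp 4 * R^2))^d ≤ E * E^d := by
              apply mul_le_mul hE2 ?_ (by positivity) (by linarith)
              exact pow_le_pow_left₀ (by positivity) hEA d
          _ = E^(d+1) := by rw [pow_succ]; ring


lemma lem_key (a L : ℝ) (hL0 : 0 < L) (hL1 : L ≤ 1) (N : ℕ) (v : ℤ → ℂ) :
    (∑ n ∈ Finset.Icc (-(N:ℤ)) N, ‖v n‖ ^ 2)
      ≤ (2/L + Real.exp 4 * (16*Real.exp 1/L)^2)^(2*N+1) *
        ∫ x in a..(a+L), ‖∑ n ∈ Finset.Icc (-(N:ℤ)) N,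
          v n * Complex.exp (Complex.I * n * x)‖ ^ 2 := by
  obtain ⟨d, hd⟩ : ∃ d : ℕ, d = 2*N := ⟨_, rfl⟩
  set s : Finset ℤ := Finset.Icc (-(N:ℤ)) N with hs
  set P : ℝ → ℂ := fun x => ∑ n ∈ s, v n * Complex.exp (Complex.I * n * x) with hP
  have hPc : Continuous P := by
    apply continuous_finset_sum
    intro n _
    apply Continuous.mul continuous_const
    apply Complex.continuous_exp.comp
    continuity
  set g : ℝ → ℝ := fun x => ‖P x‖ ^ 2 with hgdef
  have hg : Continuous g := (continuous_norm.comp hPc).pow 2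
  have hg0 : ∀ x, 0 ≤ g x := fun x => by positivity
  obtain ⟨J, hJdef⟩ : ∃ J : ℝ, J = ∫ x in a..(a+L), g x := ⟨_, rfl⟩
  have hJ0 : 0 ≤ J := by
    rw [hJdef]
    apply intervalIntegral.integral_nonneg (by linarith) (fun x _ => hg0 x)
  obtain ⟨h, hh⟩ : ∃ h : ℝ, h = L/(2*((d:ℝ)+1)) := ⟨_, rfl⟩
  have hh0 : 0 < h := by rw [hh]; positivity
  have hLh : (2*(d:ℝ)+2)*h = L := by rw [hh]; field_simp
  -- choose the nodes
  choose xx hx1 hx2 using fun i : ℕ =>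
    lem_min_avg hg (c := a + 2*i*h) hh0
  -- integral over subinterval vs J
  have hsub : ∀ i : ℕ, (i:ℝ) ≤ d → g (xx i) * h ≤ J := by
    intro i hi
    refine (hx2 i).trans ?_
    rw [hJdef]
    have hi0 : (0:ℝ) ≤ (i:ℝ) := Nat.cast_nonneg i
    have b1 : a ≤ a + 2*(i:ℝ)*h := by nlinarith
    have b2 : a + 2*(i:ℝ)*h ≤ a + 2*(i:ℝ)*h + h := by linarith
    have b3 : a + 2*(i:ℝ)*h + h ≤ a + L := by nlinarith
    exact intervalIntegral.integral_mono_interval b1 b2 b3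
      (MeasureTheory.ae_of_all _ (fun x => hg0 x)) (hg.intervalIntegrable _ _)
  obtain ⟨M, hMdef⟩ : ∃ M : ℝ, M = Real.sqrt (J/h) := ⟨_, rfl⟩
  have hM0 : 0 ≤ M := by rw [hMdef]; positivity
  have hM2 : M^2 = J/h := by rw [hMdef]; exact Real.sq_sqrt (by positivity)
  have hMb : ∀ i : ℕ, (i:ℝ) ≤ d → ‖P (xx i)‖ ≤ M := by
    intro i hi
    have h1 : ‖P (xx i)‖^2 ≤ J/h := by
      rw [le_div_iff₀ hh0]
      exact hsub i hi
    calc ‖P (xx i)‖ = Real.sqrt (‖P (xx i)‖^2) :=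
          (Real.sqrt_sq (norm_nonneg _)).symm
      _ ≤ Real.sqrt (J/h) := Real.sqrt_le_sqrt h1
      _ = M := hMdef.symm
  -- separation of nodes
  have key2 : ∀ i j : ℕ, i < j → (j:ℝ) ≤ d →
      (Nat.dist i j:ℝ)*h ≤ xx j - xx i ∧ xx j - xx i ≤ 1 := by
    intro i j hij hjd
    have hdc : (Nat.dist i j:ℝ) = (j:ℝ) - i := by
      rw [Nat.dist_eq_sub_of_le hij.le, Nat.cast_sub hij.le]
    have hi1 := (hx1 i).1
    have hi2 := (hx1 i).2
    have hj1 := (hx1 j).1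
    have hj2 := (hx1 j).2
    have hij1 : (i:ℝ)+1 ≤ j := by exact_mod_cast hij
    have hid : (i:ℝ) ≤ d := by linarith
    constructor
    · rw [hdc]; nlinarith
    · nlinarith
  obtain ⟨z, hzdef⟩ : ∃ z : ℕ → ℂ, z = fun i => Complex.exp (Complex.I * (xx i)) := ⟨_, rfl⟩
  have hz : ∀ i ∈ Finset.range (d+1), ‖z i‖ = 1 := by
    intro i _
    rw [hzdef]
    simp only
    rw [Complex.norm_exp]
    simp [Complex.mul_re]
  have hsepz : ∀ i ∈ Finset.range (d+1), ∀ j ∈ Finset.range (d+1), i ≠ j →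
      (h/2) * Nat.dist i j ≤ ‖z i - z j‖ := by
    have main : ∀ i j : ℕ, i < j → (j:ℝ) ≤ d →
        (h/2) * Nat.dist i j ≤ ‖z i - z j‖ := by
      intro i j hij hjd
      obtain ⟨k1, k2⟩ := key2 i j hij hjd
      have habs : |(xx i) - (xx j)| = xx j - xx i := by
        rw [abs_sub_comm, abs_of_nonneg]
        have : (0:ℝ) < (Nat.dist i j:ℝ)*h := by
          have := Nat.dist_pos_of_ne hij.ne
          positivity
        linarith
      have hle1 : |(xx i) - (xx j)| ≤ 1 := by rw [habs]; exact k2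
      have := lem_circle_sep hle1
      rw [hzdef]
      simp only
      calc (h/2) * Nat.dist i j ≤ |(xx i) - (xx j)| / 2 := by
            rw [habs]; linarith
        _ ≤ _ := this
    intro i hi j hj hij
    have hid : (i:ℝ) ≤ d := by
      have := Finset.mem_range.mp hi
      exact_mod_cast Nat.lt_succ_iff.mp this
    have hjd : (j:ℝ) ≤ d := by
      have := Finset.mem_range.mp hj
      exact_mod_cast Nat.lt_succ_iff.mp this
    rcases lt_or_gt_of_ne hij with hlt | hgt
    · exact main i j hlt hjd
    · have := main j i hgt hid
      rwa [Nat.dist_comm, norm_sub_rev] at this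
  -- the polynomial
  obtain ⟨Q, hQdeg, hQeval⟩ := lem_Q N v
  have hdeg' : Q.degree < ((d+1 : ℕ) : WithBot ℕ) := by
    have e : d + 1 = 2*N+1 := by omega
    rw [e]; exact hQdeg
  have hQM : ∀ i ∈ Finset.range (d+1), ‖Q.eval (z i)‖ ≤ M := by
    intro i hi
    have hid : (i:ℝ) ≤ (d:ℝ) := by
      have := Finset.mem_range.mp hi
      exact_mod_cast Nat.lt_succ_iff.mp this
    have e := hQeval (xx i)
    rw [hzdef]
    simp only
    rw [e]
    exact hMb i hid
  have h24 : (2:ℝ)/(h/2) = 4/h := by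
    field_simp
    ring
  have hB' : ∀ x : ℝ, ‖P x‖
      ≤ ((d:ℝ)+1) * ((4/h)^d * 2^d / d.factorial) * M := by
    intro x
    have hy : ‖Complex.exp (Complex.I * x)‖ = 1 := by
      rw [Complex.norm_exp]; simp [Complex.mul_re]
    have hlag := lem_lagrange d z Q hdeg' hz (h/2) (by positivity) hsepz M hQM
      (Complex.exp (Complex.I * x)) hy
    rw [hQeval x, h24] at hlag
    exact hlag
  obtain ⟨B, hBdef⟩ : ∃ B : ℝ, B = ((d:ℝ)+1) * ((4/h)^d * 2^d / d.factorial) * M := ⟨_, rfl⟩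
  have hcoeff : ∀ n ∈ s, ‖v n‖ ≤ B := by
    intro n hn
    exact lem_coeff_bound s v B (fun x => hBdef ▸ hB' x) n hn
  have hcardN : #s = 2*N+1 := by
    rw [hs, Int.card_Icc]
    omega
  have hB0 : 0 ≤ B := by rw [hBdef]; positivity
  calc ∑ n ∈ s, ‖v n‖ ^ 2 ≤ ∑ _n ∈ s, B^2 := by
        apply Finset.sum_le_sum
        intro n hn
        exact pow_le_pow_left₀ (norm_nonneg _) (hcoeff n hn) 2
    _ = (#s : ℝ) * B^2 := by rw [Finset.sum_const, nsmul_eq_mul]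
    _ = ((d:ℝ)+1) * (((d:ℝ)+1) * ((4/h)^d * 2^d / d.factorial))^2 * M^2 := by
        rw [hcardN, hBdef, hd]
        push_cast
        ring
    _ = ((d:ℝ)+1) * (((d:ℝ)+1) * ((4/h)^d * 2^d / d.factorial))^2 * (J/h) := by rw [hM2]
    _ ≤ (2/L + Real.exp 4 * (16*Real.exp 1/L)^2)^(d+1) * J :=
        lem_arith L J hL0 hL1 hJ0 d h hh
    _ = (2/L + Real.exp 4 * (16*Real.exp 1/L)^2)^(2*N+1) *
        ∫ x in a..(a+L), ‖∑ n ∈ Finset.Icc (-(N:ℤ)) N,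
          v n * Complex.exp (Complex.I * n * x)‖ ^ 2 := by
        rw [hJdef, hd]



theorem stmt14 (a b : ℝ) (hab : a < b) :
    ∃ C > (0:ℝ), ∀ (μ : ℝ), 0 < μ → ∀ v : ℤ → ℂ,
      (∑ n ∈ Finset.Icc (-⌊μ⌋) ⌊μ⌋, ‖v n‖ ^ 2)
        ≤ C * Real.exp (C * μ) *
          ∫ x in a..b,
            ‖∑ n ∈ Finset.Icc (-⌊μ⌋) ⌊μ⌋,
              v n * Complex.exp (Complex.I * (n:ℂ) * (x:ℂ))‖ ^ 2 := by
  obtain ⟨L, hLdef⟩ : ∃ L : ℝ, L = min (b-a) 1 := ⟨_, rfl⟩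
  have hL0 : 0 < L := by rw [hLdef]; exact lt_min (by linarith) one_pos
  have hL1 : L ≤ 1 := by rw [hLdef]; exact min_le_right _ _
  have hLb : a + L ≤ b := by
    have : L ≤ b - a := by rw [hLdef]; exact min_le_left _ _
    linarith
  obtain ⟨E, hEdef⟩ : ∃ E : ℝ, E = 2/L + Real.exp 4 * (16*Real.exp 1/L)^2 := ⟨_, rfl⟩
  have hE2 : 2 ≤ E := by
    have h1 : (2:ℝ) ≤ 2/L := by
      rw [le_div_iff₀ hL0]
      nlinarith
    have h2 : (0:ℝ) ≤ Real.exp 4 * (16*Real.exp 1/L)^2 := by positivity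
    rw [hEdef]; linarith
  have hE0 : 0 < E := by linarith
  have hlogE : 0 ≤ Real.log E := Real.log_nonneg (by linarith)
  refine ⟨E + 2*Real.log E + 1, by linarith, ?_⟩
  intro μ hμ v
  obtain ⟨C, hCdef⟩ : ∃ C : ℝ, C = E + 2*Real.log E + 1 := ⟨_, rfl⟩
  rw [← hCdef]
  obtain ⟨N, hNdef⟩ : ∃ N : ℕ, N = ⌊μ⌋.toNat := ⟨_, rfl⟩
  have hfloor0 : (0:ℤ) ≤ ⌊μ⌋ := Int.floor_nonneg.mpr hμ.le
  have hNfloor : ((N:ℤ)) = ⌊μ⌋ := by rw [hNdef]; exact Int.toNat_of_nonneg hfloor0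
  rw [← hNfloor]
  have hNμ : (N:ℝ) ≤ μ := by
    have h1 : ((⌊μ⌋:ℤ):ℝ) ≤ μ := Int.floor_le μ
    have h2 : ((N:ℤ):ℝ) = ((⌊μ⌋:ℤ):ℝ) := by rw [hNfloor]
    push_cast at h2
    linarith
  have key := lem_key a L hL0 hL1 N v
  rw [← hEdef] at key
  -- monotonicity of the integral
  have hPc : Continuous (fun x : ℝ => ‖∑ n ∈ Finset.Icc (-(N:ℤ)) N,
      v n * Complex.exp (Complex.I * n * x)‖ ^ 2) := by
    apply Continuous.pow
    apply continuous_norm.comp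
    apply continuous_finset_sum
    intro n _
    apply Continuous.mul continuous_const
    apply Complex.continuous_exp.comp
    continuity
  have hmono : (∫ x in a..(a+L), ‖∑ n ∈ Finset.Icc (-(N:ℤ)) N,
        v n * Complex.exp (Complex.I * n * x)‖ ^ 2)
      ≤ ∫ x in a..b, ‖∑ n ∈ Finset.Icc (-(N:ℤ)) N,
        v n * Complex.exp (Complex.I * n * x)‖ ^ 2 := by
    apply intervalIntegral.integral_mono_interval (le_refl a) (by linarith) hLb
      (MeasureTheory.ae_of_all _ (fun x => by positivity)) (hPc.intervalIntegrable _ _)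
  have hIab0 : 0 ≤ ∫ x in a..b, ‖∑ n ∈ Finset.Icc (-(N:ℤ)) N,
      v n * Complex.exp (Complex.I * n * x)‖ ^ 2 :=
    intervalIntegral.integral_nonneg hab.le (fun x _ => by positivity)
  have hexpE : E^(2*N+1) ≤ C * Real.exp (C * μ) := by
    have e1 : E^(2*N+1) = Real.exp ((2*(N:ℝ)+1) * Real.log E) := by
      rw [← Real.exp_log hE0]
      rw [← Real.exp_nat_mul]
      congr 1
      rw [Real.log_exp]
      push_cast
      ring
    rw [e1]
    have e2 : (2*(N:ℝ)+1) * Real.log E ≤ Real.log E + (2*Real.log E) * μ := by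
      have : (2*(N:ℝ)+1) * Real.log E ≤ (2*μ+1) * Real.log E := by
        apply mul_le_mul_of_nonneg_right ?_ hlogE
        linarith
      linarith [this]
    have e3 : (2*Real.log E) * μ ≤ C * μ := by
      apply mul_le_mul_of_nonneg_right ?_ hμ.le
      rw [hCdef]; linarith
    calc Real.exp ((2*(N:ℝ)+1) * Real.log E)
        ≤ Real.exp (Real.log E + C * μ) := Real.exp_le_exp.mpr (by linarith)
      _ = E * Real.exp (C * μ) := by rw [Real.exp_add, Real.exp_log hE0]
      _ ≤ C * Real.exp (C * μ) := by
          apply mul_le_mul_of_nonneg_right ?_ (Real.exp_pos _).le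
          rw [hCdef]; linarith
  calc (∑ n ∈ Finset.Icc (-(N:ℤ)) N, ‖v n‖ ^ 2)
      ≤ E^(2*N+1) * ∫ x in a..(a+L), ‖∑ n ∈ Finset.Icc (-(N:ℤ)) N,
          v n * Complex.exp (Complex.I * n * x)‖ ^ 2 := key
    _ ≤ E^(2*N+1) * ∫ x in a..b, ‖∑ n ∈ Finset.Icc (-(N:ℤ)) N,
          v n * Complex.exp (Complex.I * n * x)‖ ^ 2 := by
        apply mul_le_mul_of_nonneg_left hmono (by positivity)
    _ ≤ C * Real.exp (C * μ) * ∫ x in a..b, ‖∑ n ∈ Finset.Icc (-(N:ℤ)) N,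
          v n * Complex.exp (Complex.I * n * x)‖ ^ 2 :=
        mul_le_mul_of_nonneg_right hexpE hIab0
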